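/- Let F be a 3-CNF formula with n variables x_1, …, x_n and m clauses C_1, …, C_m, each clause containing exactly three literals. Define identical valuations over 2n+2 goods: v(t_i) = 5^{m+n−i} + Σ_{j : x_i ∈ C_j} 5^{m−j}, v(f_i) = 5^{m+n−i} + Σ_{j : ¬x_i ∈ C_j} 5^{m−j}, v(r) = Σ_{j∈[m]} 5^{j−1}, and v(s) = Σ_{i∈[n]} 5^{m+i−1} + 2·Σ_{j∈[m]} 5^{j−1}. Then there exists a truth assignment making exactly one literal true in each clause of F if and only if the goods can be partitioned into three bundles of equal total value. -/

import Mathlib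

open Finset

/-- The goods: `Sum.inl (i, true)` is `t_i`, `Sum.inl (i, false)` is `f_i`,
`Sum.inr true` is `s`, and `Sum.inr false` is `r`. -/
abbrev SatItem (n : ℕ) := (Fin n × Bool) ⊕ Bool

/-- The common valuation, built from a 3-CNF with clause literals
`lit j 0, lit j 1, lit j 2` (a literal is a variable together with its sign). -/
noncomputable def satVal (n m : ℕ) (lit : Fin m → Fin 3 → Fin n × Bool) :
    SatItem n → ℝ
  | Sum.inl (i, b) =>
      (5 : ℝ) ^ (m + n - 1 - i.val) +
        ∑ j : Fin m, (if ∃ k : Fin 3, lit j k = (i, b) then (5 : ℝ) ^ (m - 1 - j.val) else 0)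
  | Sum.inr true =>
      (∑ i : Fin n, (5 : ℝ) ^ (m + i.val)) + 2 * ∑ j : Fin m, (5 : ℝ) ^ j.val
  | Sum.inr false => ∑ j : Fin m, (5 : ℝ) ^ j.val


lemma geom_bound (N : ℕ) : 2 * ∑ q ∈ Finset.range N, 5 ^ q < 5 ^ N := by
  induction N with
  | zero => simp
  | succ N ih =>
    rw [Finset.sum_range_succ, pow_succ]
    have h5 : 0 < 5 ^ N := Nat.pow_pos (by norm_num)
    omega

lemma digit3 (N : ℕ) (c : Fin 3 → ℕ → ℕ) (d : ℕ → ℕ) (hd : ∀ p, d p ≤ 2)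
    (hsum : ∀ p, p < N → c 0 p + c 1 p + c 2 p = 3 * d p)
    (hval : ∀ a, ∑ q ∈ Finset.range N, c a q * 5 ^ q = ∑ q ∈ Finset.range N, d q * 5 ^ q) :
    ∀ a, ∀ p < N, c a p = d p := by
  induction N with
  | zero => intro a p hp; omega
  | succ N ih =>
    have hDlt : ∑ q ∈ Finset.range N, d q * 5 ^ q < 5 ^ N := by
      calc ∑ q ∈ Finset.range N, d q * 5 ^ q ≤ ∑ q ∈ Finset.range N, 2 * 5 ^ q := by
            apply Finset.sum_le_sum; intro q _; exact Nat.mul_le_mul_right _ (hd q)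
        _ = 2 * ∑ q ∈ Finset.range N, 5 ^ q := by rw [Finset.mul_sum]
        _ < 5 ^ N := geom_bound N
    have hval' := fun a => hval a
    simp only [Finset.sum_range_succ] at hval'
    -- each c a N ≤ d N
    have hle : ∀ a, c a N ≤ d N := by
      intro a
      by_contra h
      have h1 : d N + 1 ≤ c a N := by omega
      have : (d N + 1) * 5 ^ N ≤ c a N * 5 ^ N := Nat.mul_le_mul_right _ h1
      have h2 := hval' a
      nlinarith [Nat.zero_le (∑ q ∈ Finset.range N, c a q * 5 ^ q)]
    have heq : ∀ a, c a N = d N := by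
      intro a
      have h0 := hle 0; have h1 := hle 1; have h2 := hle 2
      have hs := hsum N (Nat.lt_succ_self N)
      fin_cases a
      · show c 0 N = d N; omega
      · show c 1 N = d N; omega
      · show c 2 N = d N; omega
    have hS : ∀ a, ∑ q ∈ Finset.range N, c a q * 5 ^ q = ∑ q ∈ Finset.range N, d q * 5 ^ q := by
      intro a
      have := hval' a
      rw [heq a] at this
      omega
    intro a p hp
    rcases Nat.lt_succ_iff_lt_or_eq.mp hp with h | h
    · exact ih (fun q hq => hsum q (by omega)) hS a p h
    · rw [h]; exact heq a

def satW (n m : ℕ) (lit : Fin m → Fin 3 → Fin n × Bool) : SatItem n → ℕ → ℕ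
  | Sum.inl (i, b), p =>
      (if p = m + n - 1 - i.val then 1 else 0) +
      ∑ j : Fin m, (if (∃ k : Fin 3, lit j k = (i, b)) ∧ p = m - 1 - j.val then 1 else 0)
  | Sum.inr true, p => (if m ≤ p ∧ p < m + n then 1 else 0) + (if p < m then 2 else 0)
  | Sum.inr false, p => if p < m then 1 else 0

section lemmas
variable (n m : ℕ) (lit : Fin m → Fin 3 → Fin n × Bool)

lemma satW_inl_var (x : Fin n × Bool) (i : Fin n) :
    satW n m lit (Sum.inl x) (m + n - 1 - i.val) = if x.1 = i then 1 else 0 := by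
  obtain ⟨i', b⟩ := x
  simp only [satW]
  have h2 : (∑ j : Fin m, (if (∃ k : Fin 3, lit j k = (i', b)) ∧
      m + n - 1 - i.val = m - 1 - j.val then 1 else 0)) = 0 := by
    apply Finset.sum_eq_zero
    intro j _
    rw [if_neg]
    rintro ⟨-, h⟩
    have := j.2; have := i.2
    omega
  rw [h2, add_zero]
  by_cases h : i' = i
  · subst h
    rw [if_pos rfl, if_pos rfl]
  · rw [if_neg, if_neg h]
    intro hc
    exact h (Fin.ext (by have := i.2; have := i'.2; omega))

lemma satW_inl_clause (x : Fin n × Bool) (j : Fin m) :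
    satW n m lit (Sum.inl x) (m - 1 - j.val) =
      if ∃ k : Fin 3, lit j k = x then 1 else 0 := by
  obtain ⟨i, b⟩ := x
  simp only [satW]
  rw [if_neg (by have := j.2; have := i.2; omega), zero_add]
  rw [Finset.sum_eq_single_of_mem j (Finset.mem_univ j)]
  · exact if_congr (and_iff_left rfl) rfl rfl
  · intro j' _ hj'
    rw [if_neg]
    rintro ⟨-, h⟩
    exact hj' (Fin.ext (by have := j.2; have := j'.2; omega))

lemma satW_s_var (i : Fin n) :
    satW n m lit (Sum.inr true) (m + n - 1 - i.val) = 1 := by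
  simp only [satW]
  rw [if_pos (by have := i.2; omega), if_neg (by have := i.2; omega)]

lemma satW_s_clause (j : Fin m) :
    satW n m lit (Sum.inr true) (m - 1 - j.val) = 2 := by
  simp only [satW]
  rw [if_neg (by have := j.2; omega), if_pos (by have := j.2; omega)]

lemma satW_r_var (i : Fin n) :
    satW n m lit (Sum.inr false) (m + n - 1 - i.val) = 0 := by
  simp only [satW]
  rw [if_neg (by have := i.2; omega)]

lemma satW_r_clause (j : Fin m) :
    satW n m lit (Sum.inr false) (m - 1 - j.val) = 1 := by
  simp only [satW]
  rw [if_pos (by have := j.2; omega)]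

lemma satitem_sum (f : SatItem n → ℕ) :
    ∑ o : SatItem n, f o =
      (∑ x : Fin n × Bool, f (Sum.inl x)) + (f (Sum.inr true) + f (Sum.inr false)) := by
  rw [Fintype.sum_sum_type, Fintype.sum_bool (fun b => f (Sum.inr b))]

lemma sum_exists (j : Fin m) (hj : Function.Injective (lit j)) (f : Fin n × Bool → ℕ) :
    ∑ x : Fin n × Bool, (if ∃ k : Fin 3, lit j k = x then f x else 0) =
      ∑ k : Fin 3, f (lit j k) := by
  rw [← Finset.sum_image (f := f) (g := lit j) (s := Finset.univ) (fun x _ y _ h => hj h)]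
  rw [← Finset.sum_filter]
  congr 1
  ext x
  simp [eq_comm]

def satC (P : SatItem n → Fin 3) (a : Fin 3) (p : ℕ) : ℕ :=
  ∑ o ∈ Finset.univ.filter (fun o => P o = a), satW n m lit o p

lemma satC_var (P : SatItem n → Fin 3) (a : Fin 3) (i : Fin n) :
    satC n m lit P a (m + n - 1 - i.val) =
      (if P (Sum.inl (i, true)) = a then 1 else 0) +
      (if P (Sum.inl (i, false)) = a then 1 else 0) +
      (if P (Sum.inr true) = a then 1 else 0) := by
  unfold satC
  rw [Finset.sum_filter, satitem_sum]
  simp only [satW_inl_var, satW_s_var, satW_r_var]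
  have key : ∀ x : Fin n × Bool,
      (if P (Sum.inl x) = a then (if x.1 = i then (1:ℕ) else 0) else 0)
        = if x.1 = i then (if P (Sum.inl x) = a then 1 else 0) else 0 := by
    intro x; split_ifs <;> rfl
  simp only [key]
  rw [Fintype.sum_prod_type]
  have key2 : ∀ i' : Fin n,
      (∑ b : Bool, if (i', b).1 = i then (if P (Sum.inl (i', b)) = a then (1:ℕ) else 0) else 0)
        = if i' = i then ((if P (Sum.inl (i', true)) = a then 1 else 0) +
            (if P (Sum.inl (i', false)) = a then 1 else 0)) else 0 := by
    intro i'
    rw [Fintype.sum_bool]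
    by_cases h : i' = i <;> simp [h]
  simp only [key2]
  rw [Finset.sum_ite_eq' Finset.univ i]
  simp only [Finset.mem_univ, if_pos]
  split_ifs <;> ring

lemma satC_clause (P : SatItem n → Fin 3) (a : Fin 3) (j : Fin m)
    (hj : Function.Injective (lit j)) :
    satC n m lit P a (m - 1 - j.val) =
      (∑ k : Fin 3, if P (Sum.inl (lit j k)) = a then 1 else 0) +
      2 * (if P (Sum.inr true) = a then 1 else 0) +
      (if P (Sum.inr false) = a then 1 else 0) := by
  unfold satC
  rw [Finset.sum_filter, satitem_sum]
  simp only [satW_inl_clause, satW_s_clause, satW_r_clause]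
  have key : ∀ x : Fin n × Bool,
      (if P (Sum.inl x) = a then (if ∃ k : Fin 3, lit j k = x then (1:ℕ) else 0) else 0)
        = if ∃ k : Fin 3, lit j k = x then (if P (Sum.inl x) = a then 1 else 0) else 0 := by
    intro x; split_ifs <;> rfl
  simp only [key]
  rw [sum_exists n m lit j hj (fun x => if P (Sum.inl x) = a then 1 else 0)]
  split_ifs <;> ring
lemma satVal_eq (o : SatItem n) :
    satVal n m lit o = ∑ p ∈ Finset.range (m + n), (satW n m lit o p : ℝ) * 5 ^ p := by
  rcases o with ⟨i, b⟩ | b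
  · simp only [satVal, satW]
    push_cast
    simp only [add_mul, Finset.sum_add_distrib]
    congr 1
    · rw [Finset.sum_congr rfl (fun p _ => by rw [ite_mul, zero_mul, one_mul]),
        Finset.sum_ite_eq' (Finset.range (m + n)) (m + n - 1 - i.val) (fun p => (5:ℝ) ^ p),
        if_pos]
      simp only [Finset.mem_range]
      have := i.2
      omega
    · simp only [Finset.sum_mul]
      rw [Finset.sum_comm]
      apply Finset.sum_congr rfl
      intro j _
      by_cases hA : ∃ k : Fin 3, lit j k = (i, b)
      · rw [if_pos hA]
        rw [Finset.sum_congr rfl (fun p _ => by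
          rw [if_congr (and_iff_right hA) rfl rfl, ite_mul, zero_mul, one_mul])]
        rw [Finset.sum_ite_eq' (Finset.range (m + n)) (m - 1 - j.val) (fun p => (5:ℝ) ^ p),
          if_pos]
        simp only [Finset.mem_range]
        have := j.2
        omega
      · rw [if_neg hA]
        symm
        apply Finset.sum_eq_zero
        intro p _
        rw [if_neg (by tauto), zero_mul]
  · cases b
    · simp only [satVal, satW]
      push_cast
      rw [Finset.sum_range_add]
      have h1 : ∀ x ∈ Finset.range m, (if x < m then (1:ℝ) else 0) * 5 ^ x = 5 ^ x := by
        intro x hx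
        rw [if_pos (Finset.mem_range.mp hx), one_mul]
      have h2 : ∀ x ∈ Finset.range n, (if m + x < m then (1:ℝ) else 0) * 5 ^ (m + x) = 0 := by
        intro x hx
        rw [if_neg (by omega), zero_mul]
      rw [Finset.sum_congr rfl h1, Finset.sum_congr rfl h2, Finset.sum_const_zero, add_zero,
        Fin.sum_univ_eq_sum_range (fun j => (5:ℝ) ^ j)]
    · simp only [satVal, satW]
      push_cast
      rw [Finset.sum_range_add]
      have h1 : ∀ x ∈ Finset.range m,
          ((if m ≤ x ∧ x < m + n then (1:ℝ) else 0) + (if x < m then (2:ℝ) else 0)) * 5 ^ x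
            = 2 * 5 ^ x := by
        intro x hx
        rw [Finset.mem_range] at hx
        rw [if_neg (by omega), if_pos hx]
        ring
      have h2 : ∀ x ∈ Finset.range n,
          ((if m ≤ m + x ∧ m + x < m + n then (1:ℝ) else 0) + (if m + x < m then (2:ℝ) else 0))
            * 5 ^ (m + x) = 5 ^ (m + x) := by
        intro x hx
        rw [Finset.mem_range] at hx
        rw [if_pos (by omega), if_neg (by omega)]
        ring
      rw [Finset.sum_congr rfl h1, Finset.sum_congr rfl h2,
        Fin.sum_univ_eq_sum_range (fun j => (5:ℝ) ^ j),
        Fin.sum_univ_eq_sum_range (fun i => (5:ℝ) ^ (m + i))]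
      rw [Finset.mul_sum]
      ring


lemma bundle_eq (P : SatItem n → Fin 3) (a : Fin 3) :
    ∑ o ∈ Finset.univ.filter (fun o => P o = a), satVal n m lit o
      = ∑ p ∈ Finset.range (m + n), (satC n m lit P a p : ℝ) * 5 ^ p := by
  rw [Finset.sum_congr rfl (fun o _ => satVal_eq n m lit o), Finset.sum_comm]
  apply Finset.sum_congr rfl
  intro p _
  unfold satC
  push_cast
  rw [Finset.sum_mul]

lemma satC_total (P : SatItem n → Fin 3) (p : ℕ) :
    satC n m lit P 0 p + satC n m lit P 1 p + satC n m lit P 2 p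
      = ∑ o : SatItem n, satW n m lit o p := by
  unfold satC
  rw [← Finset.sum_fiberwise Finset.univ P (fun o => satW n m lit o p), Fin.sum_univ_three]

lemma total_eq_satC0 (p : ℕ) :
    ∑ o : SatItem n, satW n m lit o p = satC n m lit (fun _ => 0) 0 p := by
  unfold satC
  congr 1
  rw [Finset.filter_true_of_mem (fun _ _ => rfl)]

def satD (m : ℕ) (p : ℕ) : ℕ := if p < m then 2 else 1

lemma pos_cases (p : ℕ) (hp : p < m + n) :
    (∃ j : Fin m, p = m - 1 - j.val) ∨ (∃ i : Fin n, p = m + n - 1 - i.val) := by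
  rcases lt_or_ge p m with h | h
  · exact Or.inl ⟨⟨m - 1 - p, by omega⟩, by simp; omega⟩
  · exact Or.inr ⟨⟨m + n - 1 - p, by omega⟩, by simp; omega⟩

lemma total_all (P : SatItem n → Fin 3) (hd : ∀ j, Function.Injective (lit j))
    (p : ℕ) (hp : p < m + n) :
    satC n m lit P 0 p + satC n m lit P 1 p + satC n m lit P 2 p = 3 * satD m p := by
  rw [satC_total, total_eq_satC0]
  rcases pos_cases n m p hp with ⟨j, rfl⟩ | ⟨i, rfl⟩
  · rw [satC_clause n m lit _ _ j (hd j)]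
    have hj := j.2
    have hlt : m - 1 - (j:ℕ) < m := by omega
    simp [satD, hlt]
  · rw [satC_var]
    have hi := i.2
    have hge : ¬ (m + n - 1 - (i:ℕ) < m) := by omega
    simp [satD, hge]
end lemmas


def fwdP {n : ℕ} (α : Fin n → Bool) : SatItem n → Fin 3
  | Sum.inl x => if α x.1 = x.2 then 1 else 2
  | Sum.inr true => 0
  | Sum.inr false => 1

lemma fwdP_inl {n : ℕ} (α : Fin n → Bool) (x : Fin n × Bool) :
    fwdP α (Sum.inl x) = if α x.1 = x.2 then 1 else 2 := rfl

lemma fwd_clause_count : ∀ (a k0 : Fin 3),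
    (((((if (if 0 = k0 then (1:Fin 3) else 2) = a then (1:ℕ) else 0) +
      if (if 1 = k0 then (1:Fin 3) else 2) = a then 1 else 0) +
      if (if 2 = k0 then (1:Fin 3) else 2) = a then 1 else 0) +
      2 * if 0 = a then 1 else 0) + (if 1 = a then 1 else 0)) = 2 := by decide

lemma exists_unique_of_sum {Q : Fin 3 → Prop} [DecidablePred Q]
    (h : ∑ k : Fin 3, (if Q k then (1:ℕ) else 0) = 1) : ∃! k, Q k := by
  rw [← Finset.card_filter] at h
  obtain ⟨k0, hk0⟩ := Finset.card_eq_one.mp h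
  refine ⟨k0, ?_, ?_⟩
  · have : k0 ∈ Finset.univ.filter Q := hk0 ▸ Finset.mem_singleton_self k0
    exact (Finset.mem_filter.mp this).2
  · intro k hk
    have hmem : k ∈ Finset.univ.filter Q := Finset.mem_filter.mpr ⟨Finset.mem_univ _, hk⟩
    rw [hk0] at hmem
    exact Finset.mem_singleton.mp hmem

/-- There is a truth assignment making exactly one literal true in each clause iff
the goods can be partitioned into three bundles of equal total value. -/
theorem stmt11 (n m : ℕ) (lit : Fin m → Fin 3 → Fin n × Bool)
    (hdistinct : ∀ j, Function.Injective (lit j)) :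
    (∃ α : Fin n → Bool, ∀ j : Fin m,
        ∃! k : Fin 3, α (lit j k).1 = (lit j k).2) ↔
    (∃ P : SatItem n → Fin 3, ∀ a b : Fin 3,
        ∑ o ∈ Finset.univ.filter (fun o => P o = a), satVal n m lit o =
          ∑ o ∈ Finset.univ.filter (fun o => P o = b), satVal n m lit o) := by
  classical
  constructor
  · rintro ⟨α, hα⟩
    refine ⟨fwdP α, ?_⟩
    have hC : ∀ (a : Fin 3) (p : ℕ), p < m + n → satC n m lit (fwdP α) a p = satD m p := by
      intro a p hp
      rcases pos_cases n m p hp with ⟨j, rfl⟩ | ⟨i, rfl⟩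
      · have hj := j.2
        rw [satC_clause n m lit _ _ j (hdistinct j)]
        obtain ⟨k0, hk0, hu⟩ := hα j
        have hQ : ∀ k : Fin 3, (α (lit j k).1 = (lit j k).2) ↔ k = k0 :=
          fun k => ⟨hu k, fun h => h ▸ hk0⟩
        have hlt : m - 1 - (j:ℕ) < m := by omega
        simp only [fwdP_inl, fwdP, hQ, satD, if_pos hlt]
        rw [Fin.sum_univ_three]
        exact fwd_clause_count a k0
      · have hi := i.2
        rw [satC_var]
        have hge : ¬ (m + n - 1 - (i:ℕ) < m) := by omega
        simp only [fwdP_inl, fwdP, satD, if_neg hge]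
        by_cases hb : α i = true
        · fin_cases a <;> simp [hb]
        · have hb' : α i = false := by simpa using hb
          fin_cases a <;> simp [hb']
    intro a b
    rw [bundle_eq, bundle_eq]
    apply Finset.sum_congr rfl
    intro p hp
    rw [hC a p (Finset.mem_range.mp hp), hC b p (Finset.mem_range.mp hp)]
  · rintro ⟨P, hP⟩
    rcases Nat.eq_zero_or_pos m with rfl | hm
    · exact ⟨fun _ => true, fun j => j.elim0⟩
    rcases Nat.eq_zero_or_pos n with rfl | hn
    · exact ⟨fun i => i.elim0, fun j => ((lit j 0).1).elim0⟩
    -- each bundle has the target value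
    have hVsum : ∑ p ∈ Finset.range (m + n), (satC n m lit P 0 p : ℝ) * 5 ^ p +
        ∑ p ∈ Finset.range (m + n), (satC n m lit P 1 p : ℝ) * 5 ^ p +
        ∑ p ∈ Finset.range (m + n), (satC n m lit P 2 p : ℝ) * 5 ^ p
          = ∑ p ∈ Finset.range (m + n), (3 * satD m p : ℝ) * 5 ^ p := by
      rw [← Finset.sum_add_distrib, ← Finset.sum_add_distrib]
      apply Finset.sum_congr rfl
      intro p hp
      have h := total_all n m lit P hdistinct p (Finset.mem_range.mp hp)
      have h2 : ((satC n m lit P 0 p : ℝ) + satC n m lit P 1 p + satC n m lit P 2 p)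
          = 3 * satD m p := by exact_mod_cast h
      rw [← add_mul, ← add_mul, h2]
    have hV0 : ∀ a : Fin 3, ∑ p ∈ Finset.range (m + n), (satC n m lit P a p : ℝ) * 5 ^ p
        = ∑ p ∈ Finset.range (m + n), (satD m p : ℝ) * 5 ^ p := by
      have e01 : ∑ p ∈ Finset.range (m + n), (satC n m lit P 0 p : ℝ) * 5 ^ p =
          ∑ p ∈ Finset.range (m + n), (satC n m lit P 1 p : ℝ) * 5 ^ p := by
        rw [← bundle_eq, ← bundle_eq]; exact hP 0 1
      have e02 : ∑ p ∈ Finset.range (m + n), (satC n m lit P 0 p : ℝ) * 5 ^ p =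
          ∑ p ∈ Finset.range (m + n), (satC n m lit P 2 p : ℝ) * 5 ^ p := by
        rw [← bundle_eq, ← bundle_eq]; exact hP 0 2
      have htarget : ∑ p ∈ Finset.range (m + n), (3 * satD m p : ℝ) * 5 ^ p
          = 3 * ∑ p ∈ Finset.range (m + n), (satD m p : ℝ) * 5 ^ p := by
        rw [Finset.mul_sum]; apply Finset.sum_congr rfl; intro p _; ring
      rw [htarget] at hVsum
      intro a
      have e0 : ∑ p ∈ Finset.range (m + n), (satC n m lit P 0 p : ℝ) * 5 ^ p
          = ∑ p ∈ Finset.range (m + n), (satD m p : ℝ) * 5 ^ p := by linarith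
      have ea : ∑ p ∈ Finset.range (m + n), (satC n m lit P 0 p : ℝ) * 5 ^ p =
          ∑ p ∈ Finset.range (m + n), (satC n m lit P a p : ℝ) * 5 ^ p := by
        rw [← bundle_eq, ← bundle_eq]; exact hP 0 a
      rw [← ea, e0]
    have hnat : ∀ a : Fin 3, ∑ p ∈ Finset.range (m + n), satC n m lit P a p * 5 ^ p
        = ∑ p ∈ Finset.range (m + n), satD m p * 5 ^ p := by
      intro a
      have := hV0 a
      exact_mod_cast this
    have hdig : ∀ (a : Fin 3), ∀ p < m + n, satC n m lit P a p = satD m p :=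
      digit3 (m + n) (fun a p => satC n m lit P a p) (satD m)
        (fun p => by unfold satD; split <;> omega)
        (fun p hp => total_all n m lit P hdistinct p hp) hnat
    -- s and r are in different bundles
    set j0 : Fin m := ⟨0, hm⟩ with hj0
    have hne : ¬ (P (Sum.inr true) = P (Sum.inr false)) := by
      intro hc
      have hj0v : (j0:ℕ) = 0 := rfl
      have h1 := hdig (P (Sum.inr true)) (m - 1 - (j0:ℕ)) (by omega)
      rw [satC_clause n m lit P _ j0 (hdistinct j0)] at h1
      have hlt : m - 1 - (j0:ℕ) < m := by omega
      have hsatD : satD m (m - 1 - (j0:ℕ)) = 2 := by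
        simp only [satD]
        rw [if_pos hlt]
      rw [hsatD] at h1
      simp [hc] at h1
    have hvar : ∀ (a : Fin 3) (i : Fin n),
        (if P (Sum.inl (i, true)) = a then 1 else 0) +
        (if P (Sum.inl (i, false)) = a then 1 else 0) +
        (if P (Sum.inr true) = a then (1:ℕ) else 0) = 1 := by
      intro a i
      have h := hdig a (m + n - 1 - (i:ℕ)) (by have := i.2; omega)
      rw [satC_var] at h
      have hge : ¬ (m + n - 1 - (i:ℕ) < m) := by have := i.2; omega
      simp only [satD] at h
      rw [if_neg hge] at h
      exact h
    have hvarr : ∀ i : Fin n,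
        (if P (Sum.inl (i, true)) = P (Sum.inr false) then 1 else 0) +
        (if P (Sum.inl (i, false)) = P (Sum.inr false) then (1:ℕ) else 0) = 1 := by
      intro i
      have h := hvar (P (Sum.inr false)) i
      rw [if_neg hne] at h
      omega
    have hx : ∀ i : Fin n,
        (P (Sum.inl (i, true)) = P (Sum.inr false) ↔
          ¬ (P (Sum.inl (i, false)) = P (Sum.inr false))) := by
      intro i
      have h := hvarr i
      by_cases h1 : P (Sum.inl (i, true)) = P (Sum.inr false) <;>
        by_cases h2 : P (Sum.inl (i, false)) = P (Sum.inr false) <;>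
        simp [h1, h2] at h ⊢
    have key : ∀ (i : Fin n) (b : Bool),
        P (Sum.inl (i, b)) = P (Sum.inr false) ↔
          (decide (P (Sum.inl (i, true)) = P (Sum.inr false)) = b) := by
      intro i b
      cases b
      · rw [decide_eq_false_iff_not]
        have := hx i
        tauto
      · rw [decide_eq_true_iff]
    have hcl : ∀ j : Fin m,
        ∑ k : Fin 3, (if P (Sum.inl (lit j k)) = P (Sum.inr false) then (1:ℕ) else 0) = 1 := by
      intro j
      have h := hdig (P (Sum.inr false)) (m - 1 - (j:ℕ)) (by have := j.2; omega)
      rw [satC_clause n m lit P _ j (hdistinct j)] at h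
      have hlt : m - 1 - (j:ℕ) < m := by have := j.2; omega
      have hsatD : satD m (m - 1 - (j:ℕ)) = 2 := by
        simp only [satD]
        rw [if_pos hlt]
      rw [hsatD] at h
      simp [hne] at h
      simpa using h
    refine ⟨fun i => decide (P (Sum.inl (i, true)) = P (Sum.inr false)), fun j => ?_⟩
    obtain ⟨k0, hk0, hu⟩ := exists_unique_of_sum (hcl j)
    refine ⟨k0, ?_, ?_⟩
    · exact (key (lit j k0).1 (lit j k0).2).mp (by rw [Prod.mk.eta]; exact hk0)
    · intro k hk
      refine hu k ?_
      have := (key (lit j k).1 (lit j k).2).mpr hk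
      rwa [Prod.mk.eta] at this
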